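/- Let p = x² + y² and q = x³ − 3xy² in ℝ[x,y]. A polynomial f ∈ ℝ[x,y] all of whose coefficients are integers is invariant under the dihedral group D₃ — i.e. f is unchanged under the two substitutions (x,y) ↦ (−x/2 − (√3/2)·y, (√3/2)·x − y/2) (rotation by 2π/3) and (x,y) ↦ (x, −y) (reflection) — if and only if f lies in the ℤ-subalgebra of ℝ[x,y] generated by p and q. In other words, ℝ[x,y]^{D₃} ∩ ℤ[x,y] = ℤ[x² + y², x³ − 3xy²]. -/

import Mathlib

open MvPolynomial

namespace DihedAux

noncomputable section

abbrev Z2 := MvPolynomial (Fin 2) ℤ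

def Pz : Z2 := X 0 ^ 2 + X 1 ^ 2
def Qz : Z2 := X 0 ^ 3 - 3 * X 0 * X 1 ^ 2

def mn (a b : ℕ) : Fin 2 →₀ ℕ := Finsupp.single 0 a + Finsupp.single 1 b

lemma mn_apply0 (a b : ℕ) : mn a b 0 = a := by simp [mn]
lemma mn_apply1 (a b : ℕ) : mn a b 1 = b := by simp [mn, Finsupp.single_apply]

lemma mn_eta (m : Fin 2 →₀ ℕ) : mn (m 0) (m 1) = m := by
  ext i
  fin_cases i
  · simp [mn]
  · simp [mn, Finsupp.single_apply]

lemma mn_le_mn {a b c d : ℕ} : mn a b ≤ mn c d ↔ a ≤ c ∧ b ≤ d := by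
  constructor
  · intro h
    exact ⟨by simpa [mn_apply0] using h 0, by simpa [mn_apply1] using h 1⟩
  · intro ⟨h1, h2⟩ i
    fin_cases i
    · simpa [mn_apply0] using h1
    · simpa [mn_apply1] using h2

lemma mn_sub (a b c d : ℕ) : mn c d - mn a b = mn (c - a) (d - b) := by
  ext i
  fin_cases i
  · simp [mn_apply0, Finsupp.tsub_apply]
  · simp [mn_apply1, Finsupp.tsub_apply]

lemma mn_injective {a b c d : ℕ} (h : mn a b = mn c d) : a = c ∧ b = d := by
  constructor
  · have h0 : mn a b 0 = mn c d 0 := by rw [h]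
    simpa [mn_apply0] using h0
  · have h1 : mn a b 1 = mn c d 1 := by rw [h]
    simpa [mn_apply1] using h1

end

end DihedAux
namespace DihedAux
noncomputable section

lemma single0_eq_mn (a : ℕ) : Finsupp.single (0 : Fin 2) a = mn a 0 := by
  ext i; fin_cases i <;> simp [mn, Finsupp.single_apply]

lemma single1_eq_mn (b : ℕ) : Finsupp.single (1 : Fin 2) b = mn 0 b := by
  ext i; fin_cases i <;> simp [mn, Finsupp.single_apply]

lemma mn_add (a b c d : ℕ) : mn a b + mn c d = mn (a+c) (b+d) := by
  ext i; fin_cases i <;> simp [mn, Finsupp.single_apply]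

lemma mn_zero : mn 0 0 = 0 := by
  ext i; fin_cases i <;> simp [mn]

lemma Pz_eq : Pz = monomial (mn 2 0) 1 + monomial (mn 0 2) 1 := by
  rw [Pz, X_pow_eq_monomial, X_pow_eq_monomial, single0_eq_mn, single1_eq_mn]

lemma Qz_eq : Qz = monomial (mn 3 0) 1 + monomial (mn 1 2) (-3) := by
  have h1 : (X 0 ^ 3 : Z2) = monomial (mn 3 0) 1 := by
    rw [X_pow_eq_monomial, single0_eq_mn]
  have h2 : (3 * X 0 * X 1 ^ 2 : Z2) = monomial (mn 1 2) 3 := by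
    have c3 : (3 : Z2) = C 3 := by norm_num
    rw [show (3 * X 0 * X 1 ^ 2 : Z2) = 3 * (X 0 ^ 1 * X 1 ^ 2) by ring, c3,
      X_pow_eq_monomial, X_pow_eq_monomial, single0_eq_mn, single1_eq_mn,
      monomial_mul, C_mul_monomial, mn_add, mul_one]
    norm_num
  rw [Qz, h1, h2]
  simp [sub_eq_add_neg]

lemma coeff_mul_P (g : Z2) (a b : ℕ) :
    coeff (mn a b) (g * Pz) =
      (if 2 ≤ a then coeff (mn (a-2) b) g else 0) +
      (if 2 ≤ b then coeff (mn a (b-2)) g else 0) := by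
  rw [Pz_eq, mul_add, coeff_add, coeff_mul_monomial', coeff_mul_monomial']
  congr 1
  · by_cases h : 2 ≤ a
    · rw [if_pos (mn_le_mn.2 ⟨h, Nat.zero_le _⟩), if_pos h, mn_sub, mul_one, Nat.sub_zero]
    · rw [if_neg h, if_neg (fun hc => h (mn_le_mn.1 hc).1)]
  · by_cases h : 2 ≤ b
    · rw [if_pos (mn_le_mn.2 ⟨Nat.zero_le _, h⟩), if_pos h, mn_sub, mul_one, Nat.sub_zero]
    · rw [if_neg h, if_neg (fun hc => h (mn_le_mn.1 hc).2)]

lemma coeff_mul_Q (g : Z2) (a b : ℕ) :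
    coeff (mn a b) (g * Qz) =
      (if 3 ≤ a then coeff (mn (a-3) b) g else 0) +
      (if 1 ≤ a ∧ 2 ≤ b then coeff (mn (a-1) (b-2)) g * (-3) else 0) := by
  rw [Qz_eq, mul_add, coeff_add, coeff_mul_monomial', coeff_mul_monomial']
  congr 1
  · by_cases h : 3 ≤ a
    · rw [if_pos (mn_le_mn.2 ⟨h, Nat.zero_le _⟩), if_pos h, mn_sub, mul_one, Nat.sub_zero]
    · rw [if_neg h, if_neg (fun hc => h (mn_le_mn.1 hc).1)]
  · by_cases h : 1 ≤ a ∧ 2 ≤ b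
    · rw [if_pos (mn_le_mn.2 h), if_pos h, mn_sub]
    · rw [if_neg h, if_neg (fun hc => h ⟨(mn_le_mn.1 hc).1, (mn_le_mn.1 hc).2⟩)]

lemma add_ne_zero {x y : ℤ} (h : x + y ≠ 0) : x ≠ 0 ∨ y ≠ 0 := by
  by_contra hc
  push_neg at hc
  rw [hc.1, hc.2, add_zero] at h
  exact h rfl

def Good (i j : ℕ) (g : Z2) : Prop :=
  coeff (mn j (2*i+2*j)) g = (-3)^j ∧
  ∀ a b : ℕ, coeff (mn a b) g ≠ 0 → b < 2*i+2*j ∨ (b = 2*i+2*j ∧ a ≤ j)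

lemma good_one : Good 0 0 1 := by
  constructor
  · rw [show ((-3:ℤ))^0 = 1 by norm_num, coeff_one, if_pos mn_zero.symm]
  · intro a b h
    right
    rw [coeff_one] at h
    by_cases ha : (0 : Fin 2 →₀ ℕ) = mn a b
    · obtain ⟨h1, h2⟩ := mn_injective (mn_zero.trans ha)
      omega
    · rw [if_neg ha] at h; exact absurd rfl h

lemma good_stepP {i j : ℕ} {g : Z2} (hg : Good i j g) : Good (i+1) j (g * Pz) := by
  obtain ⟨h1, h2⟩ := hg
  constructor
  · rw [coeff_mul_P]
    have t1 : (if 2 ≤ j then coeff (mn (j-2) (2*(i+1)+2*j)) g else 0) = 0 := by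
      split_ifs with h
      · by_contra hne
        rcases h2 _ _ hne with h' | h' <;> omega
      · rfl
    rw [t1, zero_add, if_pos (by omega : 2 ≤ 2*(i+1)+2*j),
      show 2*(i+1)+2*j - 2 = 2*i+2*j by omega, h1]
  · intro a b h
    rw [coeff_mul_P] at h
    rcases add_ne_zero h with h' | h'
    · have hc : 2 ≤ a := by by_contra hc; rw [if_neg hc] at h'; exact h' rfl
      rw [if_pos hc] at h'
      rcases h2 _ _ h' with hx | hx <;> left <;> omega
    · have hc : 2 ≤ b := by by_contra hc; rw [if_neg hc] at h'; exact h' rfl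
      rw [if_pos hc] at h'
      rcases h2 _ _ h' with hx | hx
      · left; omega
      · right; omega

lemma good_stepQ {i j : ℕ} {g : Z2} (hg : Good i j g) : Good i (j+1) (g * Qz) := by
  obtain ⟨h1, h2⟩ := hg
  constructor
  · rw [coeff_mul_Q]
    have t1 : (if 3 ≤ j+1 then coeff (mn (j+1-3) (2*i+2*(j+1))) g else 0) = 0 := by
      split_ifs with h
      · by_contra hne
        rcases h2 _ _ hne with h' | h' <;> omega
      · rfl
    rw [t1, zero_add, if_pos (by constructor <;> omega : 1 ≤ j+1 ∧ 2 ≤ 2*i+2*(j+1)),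
      show j+1-1 = j by omega, show 2*i+2*(j+1) - 2 = 2*i+2*j by omega, h1]
    ring
  · intro a b h
    rw [coeff_mul_Q] at h
    rcases add_ne_zero h with h' | h'
    · have hc : 3 ≤ a := by by_contra hc; rw [if_neg hc] at h'; exact h' rfl
      rw [if_pos hc] at h'
      rcases h2 _ _ h' with hx | hx <;> left <;> omega
    · have hc : 1 ≤ a ∧ 2 ≤ b := by by_contra hc; rw [if_neg hc] at h'; exact h' rfl
      rw [if_pos hc] at h'
      have h'' : coeff (mn (a-1) (b-2)) g ≠ 0 := by
        intro hz; rw [hz, zero_mul] at h'; exact h' rfl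
      rcases h2 _ _ h'' with hx | hx
      · left; omega
      · right; omega

lemma goodPQ (i j : ℕ) : Good i j (Pz^i * Qz^j) := by
  induction j with
  | zero =>
    have hP : ∀ n, Good n 0 (Pz^n) := by
      intro n
      induction n with
      | zero => simpa using good_one
      | succ n ih => rw [pow_succ]; exact good_stepP ih
    simpa using hP i
  | succ n ih =>
    rw [pow_succ, ← mul_assoc]
    exact good_stepQ ih

end
end DihedAux
namespace DihedAux
noncomputable section

abbrev Idx := Fin 2 →₀ ℕ

lemma fin2_ext {k k' : Idx} (h0 : k 0 = k' 0) (h1 : k 1 = k' 1) : k = k' := by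
  ext i; fin_cases i
  · exact h0
  · exact h1

def vz (k : Idx) : Z2 := Pz ^ (k 0) * Qz ^ (k 1)

/-- X 0 ^ (3j) version, for mod 3 arguments -/
def wz (k : Idx) : Z2 := Pz ^ (k 0) * X 0 ^ (3 * k 1)

lemma coeff_mul_Xpow (g : Z2) (n a b : ℕ) :
    coeff (mn a b) (g * X 0 ^ n) = if n ≤ a then coeff (mn (a-n) b) g else 0 := by
  rw [X_pow_eq_monomial, single0_eq_mn, coeff_mul_monomial']
  by_cases h : n ≤ a
  · rw [if_pos (mn_le_mn.2 ⟨h, Nat.zero_le _⟩), if_pos h, mn_sub, mul_one, Nat.sub_zero]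
  · rw [if_neg (fun hc => h (mn_le_mn.1 hc).1), if_neg h]

lemma goodP (i : ℕ) :
    coeff (mn 0 (2*i)) (Pz^i) = 1 ∧
    ∀ a b : ℕ, coeff (mn a b) (Pz^i) ≠ 0 → b < 2*i ∨ (b = 2*i ∧ a = 0) := by
  obtain ⟨h1, h2⟩ := goodPQ i 0
  rw [pow_zero, mul_one] at h1 h2
  constructor
  · simpa using h1
  · intro a b h
    rcases h2 a b h with h' | h'
    · left; omega
    · right; omega

lemma goodX (k : Idx) :
    coeff (mn (3 * k 1) (2 * k 0)) (wz k) = 1 ∧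
    ∀ a b : ℕ, coeff (mn a b) (wz k) ≠ 0 → b < 2 * k 0 ∨ (b = 2 * k 0 ∧ a ≤ 3 * k 1) := by
  obtain ⟨h1, h2⟩ := goodP (k 0)
  constructor
  · rw [wz, coeff_mul_Xpow, if_pos (le_refl _), Nat.sub_self]
    exact h1
  · intro a b h
    rw [wz, coeff_mul_Xpow] at h
    by_cases hc : 3 * k 1 ≤ a
    · rw [if_pos hc] at h
      rcases h2 _ _ h with h' | h'
      · left; exact h'
      · right; omega
    · rw [if_neg hc] at h; exact absurd rfl h

lemma Q_pow_mod3 (j : ℕ) : ∃ h : Z2, Qz ^ j = X 0 ^ (3*j) + 3 * h := by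
  induction j with
  | zero => exact ⟨0, by simp⟩
  | succ n ih =>
    obtain ⟨h, hh⟩ := ih
    refine ⟨h * X 0 ^ 3 - X 0 ^ (3*n) * X 0 * X 1 ^ 2 - 3 * (h * X 0 * X 1 ^ 2), ?_⟩
    rw [pow_succ, hh, Qz, show 3*(n+1) = 3*n + 3 by ring, pow_add]
    ring

lemma vz_mod3 (k : Idx) : ∃ h : Z2, vz k = wz k + 3 * h := by
  obtain ⟨h, hh⟩ := Q_pow_mod3 (k 1)
  exact ⟨Pz ^ (k 0) * h, by rw [vz, wz, hh]; ring⟩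

lemma gauss3 (s : Finset Idx) : ∀ (a : Idx → ℤ),
    (∀ m : Idx, (3:ℤ) ∣ coeff m (∑ k ∈ s, a k • vz k)) → ∀ k ∈ s, (3:ℤ) ∣ a k := by
  induction s using Finset.strongInduction with
  | _ s ih =>
    intro a hdiv k hk
    obtain ⟨k₀, hk₀, hmax⟩ := Finset.exists_max_image s (fun k => toLex (k 0, k 1)) ⟨k, hk⟩
    set μ := mn (3 * k₀ 1) (2 * k₀ 0) with hμ
    -- coefficient of μ in vz k' is divisible by 3 for k' ≠ k₀ in s
    have factA : ∀ k' ∈ s, k' ≠ k₀ → (3:ℤ) ∣ coeff μ (vz k') := by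
      intro k' hk's hne
      obtain ⟨h, hh⟩ := vz_mod3 k'
      have hw : coeff μ (wz k') = 0 := by
        by_contra hc
        rcases (goodX k').2 _ _ hc with h' | h'
        · have := hmax k' hk's
          rw [Prod.Lex.le_iff] at this; simp only [ofLex_toLex] at this
          rcases this with h'' | h'' <;> omega
        · have := hmax k' hk's
          rw [Prod.Lex.le_iff] at this; simp only [ofLex_toLex] at this
          rcases this with h'' | h''
          · omega
          · exact hne (fin2_ext h''.1 (by omega))
      rw [hh, coeff_add, hw, zero_add, show (3:Z2) = C 3 by norm_num, coeff_C_mul]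
      exact Dvd.intro _ rfl
    have factB : ∃ e : ℤ, coeff μ (vz k₀) = 1 + 3 * e := by
      obtain ⟨h, hh⟩ := vz_mod3 k₀
      refine ⟨coeff μ h, ?_⟩
      rw [hh, coeff_add, show (3:Z2) = C 3 by norm_num, coeff_C_mul, hμ, (goodX k₀).1]
    have hS := hdiv μ
    rw [coeff_sum] at hS
    have hsplit : ∑ k' ∈ s, coeff μ (a k' • vz k') =
        (∑ k' ∈ s.erase k₀, a k' * coeff μ (vz k')) + a k₀ * coeff μ (vz k₀) := by
      simp only [coeff_smul, smul_eq_mul]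
      rw [← Finset.sum_erase_add s _ hk₀]
    have hT : (3:ℤ) ∣ ∑ k' ∈ s.erase k₀, a k' * coeff μ (vz k') :=
      Finset.dvd_sum (fun k' hk' => Dvd.dvd.mul_left
        (factA k' (Finset.mem_of_mem_erase hk') (Finset.ne_of_mem_erase hk')) _)
    obtain ⟨e, he⟩ := factB
    have hprod : a k₀ * coeff μ (vz k₀) = a k₀ + 3 * (a k₀ * e) := by rw [he]; ring
    have h0 : (3:ℤ) ∣ a k₀ := by omega
    by_cases hkk : k = k₀
    · rwa [hkk]
    · refine ih (s.erase k₀) (Finset.erase_ssubset hk₀) a ?_ k (Finset.mem_erase.2 ⟨hkk, hk⟩)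
      intro m
      have hsum : ∑ k' ∈ s.erase k₀, a k' • vz k' = (∑ k' ∈ s, a k' • vz k') - a k₀ • vz k₀ := by
        rw [← Finset.sum_erase_add s _ hk₀]
        ring
      rw [hsum, coeff_sub, coeff_smul, smul_eq_mul]
      exact dvd_sub (hdiv m) (Dvd.dvd.mul_right h0 _)

end
end DihedAux
namespace DihedAux
noncomputable section

abbrev R2 := MvPolynomial (Fin 2) ℝ

def toR : Z2 →+* R2 := MvPolynomial.map (Int.castRingHom ℝ)

def vr (k : Idx) : R2 := toR (vz k)

lemma coeff_toR (g : Z2) (m : Idx) : coeff m (toR g) = ((coeff m g : ℤ) : ℝ) :=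
  MvPolynomial.coeff_map _ _ _

/-- ℤ[1/3] as a set of reals -/
def D : Set ℝ := {x : ℝ | ∃ (e : ℕ) (a : ℤ), x = (a : ℝ) / 3 ^ e}

lemma D_int (n : ℤ) : (n : ℝ) ∈ D := ⟨0, n, by norm_num⟩

lemma D_sub {x y : ℝ} (hx : x ∈ D) (hy : y ∈ D) : x - y ∈ D := by
  obtain ⟨e, a, rfl⟩ := hx
  obtain ⟨f, b, rfl⟩ := hy
  refine ⟨e + f, a * 3^f - b * 3^e, ?_⟩
  push_cast
  rw [pow_add]
  field_simp

lemma D_mul {x y : ℝ} (hx : x ∈ D) (hy : y ∈ D) : x * y ∈ D := by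
  obtain ⟨e, a, rfl⟩ := hx
  obtain ⟨f, b, rfl⟩ := hy
  refine ⟨e + f, a * b, ?_⟩
  push_cast
  rw [pow_add]
  field_simp

lemma D_of_mul_neg_three_pow {c : ℝ} {j : ℕ} (h : c * (-3:ℝ)^j ∈ D) : c ∈ D := by
  obtain ⟨e, a, ha⟩ := h
  refine ⟨e + j, a * (-1)^j, ?_⟩
  have h3 : ((-3:ℝ))^j ≠ 0 := by positivity
  have hc : c = (a : ℝ) / 3^e / (-3)^j := by
    field_simp at ha ⊢
    linarith [ha]
  rw [hc]
  rw [show ((-3:ℝ))^j = (-1)^j * 3^j by rw [← neg_one_mul 3, mul_pow]]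
  have h1 : ((-1:ℝ))^j ≠ 0 := by
    rcases neg_one_pow_eq_one_iff_even (R := ℝ) (by norm_num) |>.mpr with _
    rcases Nat.even_or_odd j with he | ho
    · rw [he.neg_one_pow]; norm_num
    · rw [ho.neg_one_pow]; norm_num
  push_cast
  rw [pow_add]
  field_simp
  rcases Nat.even_or_odd j with he | ho
  · rw [he.neg_one_pow]; ring
  · rw [ho.neg_one_pow]; ring

lemma gaussD (s : Finset Idx) : ∀ (c : Idx → ℝ),
    (∀ m : Idx, coeff m (∑ k ∈ s, c k • vr k) ∈ D) → ∀ k ∈ s, c k ∈ D := by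
  induction s using Finset.strongInduction with
  | _ s ih =>
    intro c hcoe k hk
    obtain ⟨k₀, hk₀, hmax⟩ := Finset.exists_max_image s
      (fun k => toLex (2 * k 0 + 2 * k 1, k 1)) ⟨k, hk⟩
    set μ := mn (k₀ 1) (2 * k₀ 0 + 2 * k₀ 1) with hμ
    have factA : ∀ k' ∈ s, k' ≠ k₀ → coeff μ (vr k') = 0 := by
      intro k' hk's hne
      rw [hμ, vr, coeff_toR]
      norm_cast
      by_contra hc
      rcases (goodPQ (k' 0) (k' 1)).2 _ _ hc with h' | h' <;>
      · have := hmax k' hk's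
        rw [Prod.Lex.le_iff] at this
        rcases this with h'' | h''
        · simp only [ofLex_toLex] at h'' <;> omega
        · simp only [ofLex_toLex] at h''
          first
          | omega
          | exact hne (fin2_ext (by omega) (by omega))
    have factB : coeff μ (vr k₀) = ((-3 : ℝ)) ^ (k₀ 1) := by
      rw [hμ, vr, coeff_toR, show vz k₀ = Pz ^ (k₀ 0) * Qz ^ (k₀ 1) from rfl,
        (goodPQ (k₀ 0) (k₀ 1)).1]
      push_cast
      ring
    have hsum : coeff μ (∑ k' ∈ s, c k' • vr k') = c k₀ * (-3:ℝ) ^ (k₀ 1) := by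
      rw [coeff_sum, ← Finset.sum_erase_add s _ hk₀]
      have hz : ∀ k' ∈ s.erase k₀, coeff μ (c k' • vr k') = 0 := by
        intro k' hk'
        rw [coeff_smul, factA k' (Finset.mem_of_mem_erase hk') (Finset.ne_of_mem_erase hk'),
          smul_zero]
      rw [Finset.sum_eq_zero hz, zero_add, coeff_smul, factB, smul_eq_mul]
    have hck₀ : c k₀ ∈ D := D_of_mul_neg_three_pow (by rw [← hsum]; exact hcoe μ)
    by_cases hkk : k = k₀
    · rwa [hkk]
    · refine ih (s.erase k₀) (Finset.erase_ssubset hk₀) c ?_ k (Finset.mem_erase.2 ⟨hkk, hk⟩)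
      intro m
      have hsum2 : ∑ k' ∈ s.erase k₀, c k' • vr k' = (∑ k' ∈ s, c k' • vr k') - c k₀ • vr k₀ := by
        rw [← Finset.sum_erase_add s _ hk₀]
        ring
      rw [hsum2, coeff_sub, coeff_smul, smul_eq_mul]
      exact D_sub (hcoe m) (D_mul hck₀ (by rw [vr, coeff_toR]; exact D_int _))

end
end DihedAux
namespace DihedAux
noncomputable section

lemma descent : ∀ (E : ℕ) (s : Finset Idx) (c : Idx → ℝ),
    (∀ k ∈ s, ∃ a : ℤ, c k = (a : ℝ) / 3 ^ E) →
    (∀ m : Idx, ∃ n : ℤ, coeff m (∑ k ∈ s, c k • vr k) = (n : ℝ)) →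
    ∀ k ∈ s, ∃ n : ℤ, c k = (n : ℝ) := by
  intro E
  induction E with
  | zero =>
    intro s c hden _ k hk
    obtain ⟨a, ha⟩ := hden k hk
    exact ⟨a, by rw [ha]; norm_num⟩
  | succ E ihE =>
    intro s c hden hint k hk
    classical
    set aF : Idx → ℤ := fun k => if h : k ∈ s then (hden k h).choose else 0 with haF
    have haFs : ∀ k ∈ s, c k = (aF k : ℝ) / 3 ^ (E+1) := by
      intro k hk
      rw [haF]
      simp only [dif_pos hk]
      exact (hden k hk).choose_spec
    set g : Z2 := ∑ k ∈ s, aF k • vz k with hg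
    have hcast : ∀ m : Idx, ((coeff m g : ℤ) : ℝ) = 3^(E+1) * coeff m (∑ k ∈ s, c k • vr k) := by
      intro m
      rw [hg]
      rw [show ((coeff m (∑ k ∈ s, aF k • vz k) : ℤ) : ℝ)
          = coeff m (toR (∑ k ∈ s, aF k • vz k)) from (coeff_toR _ _).symm]
      rw [map_sum, coeff_sum, coeff_sum, Finset.mul_sum]
      refine Finset.sum_congr rfl (fun k' hk' => ?_)
      rw [show toR (aF k' • vz k') = (aF k' : ℝ) • vr k' by
          rw [zsmul_eq_mul, map_mul, map_intCast, show vr k' = toR (vz k') from rfl,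
            MvPolynomial.smul_eq_C_mul, map_intCast]]
      rw [coeff_smul, coeff_smul, smul_eq_mul, smul_eq_mul, haFs k' hk']
      field_simp
    have hdvd : ∀ m : Idx, (3:ℤ) ∣ coeff m g := by
      intro m
      obtain ⟨n, hn⟩ := hint m
      have : ((coeff m g : ℤ) : ℝ) = ((3^(E+1) * n : ℤ) : ℝ) := by
        rw [hcast m, hn]; push_cast; ring
      have hz : coeff m g = 3^(E+1) * n := Int.cast_injective this
      rw [hz]
      exact Dvd.dvd.mul_right (dvd_pow_self 3 (Nat.succ_ne_zero E)) n
    have h3 : ∀ k ∈ s, (3:ℤ) ∣ aF k := gauss3 s aF hdvd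
    refine ihE s c ?_ hint k hk
    intro k' hk'
    obtain ⟨b, hb⟩ := h3 k' hk'
    refine ⟨b, ?_⟩
    rw [haFs k' hk', hb]
    push_cast
    rw [pow_succ]
    field_simp

end
end DihedAux
namespace DihedAux
noncomputable section

def pr : R2 := X 0 ^ 2 + X 1 ^ 2
def qr : R2 := X 0 ^ 3 - 3 * X 0 * X 1 ^ 2

def sg : R2 →ₐ[ℝ] R2 :=
  aeval ![-(C (1 / 2 : ℝ)) * X 0 - C (Real.sqrt 3 / 2) * X 1,
          C (Real.sqrt 3 / 2) * X 0 - C (1 / 2 : ℝ) * X 1]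

def tf : R2 →ₐ[ℝ] R2 := aeval ![X 0, -X 1]

lemma rel_u : (C (1/2 : ℝ) : R2) * 2 = 1 := by
  have h2 : ((2 : R2)) = C (2 : ℝ) := (map_ofNat (C : ℝ →+* R2) 2).symm
  rw [h2, ← C_mul]
  norm_num

lemma rel_v : (C (Real.sqrt 3 / 2 : ℝ) : R2) * C (Real.sqrt 3 / 2 : ℝ) * 4 = 3 := by
  have h4 : ((4 : R2)) = C (4 : ℝ) := (map_ofNat (C : ℝ →+* R2) 4).symm
  have h3 : ((3 : R2)) = C (3 : ℝ) := (map_ofNat (C : ℝ →+* R2) 3).symm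
  rw [h4, h3, ← C_mul, ← C_mul]
  congr 1
  rw [div_mul_div_comm, Real.mul_self_sqrt (by norm_num : (0:ℝ) ≤ 3)]
  norm_num

lemma sg_X0 : sg (X 0) = -(C (1 / 2 : ℝ)) * X 0 - C (Real.sqrt 3 / 2) * X 1 := by
  simp [sg]

lemma sg_X1 : sg (X 1) = C (Real.sqrt 3 / 2) * X 0 - C (1 / 2 : ℝ) * X 1 := by
  simp [sg]

lemma sg_C (r : ℝ) : sg (C r) = C r := by
  simp [sg, algebraMap_eq]

lemma tf_X0 : tf (X 0) = X 0 := by simp [tf]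
lemma tf_X1 : tf (X 1) = -(X 1) := by simp [tf]

lemma four_ne : ((4:R2)) ≠ 0 := by norm_num

lemma eight_ne : ((8:R2)) ≠ 0 := by norm_num

lemma tau_p : tf pr = pr := by
  rw [pr, map_add, map_pow, map_pow, tf_X0, tf_X1]
  ring

lemma tau_q : tf qr = qr := by
  rw [qr, map_sub, map_pow, map_mul, map_mul, map_pow, tf_X0, tf_X1,
    show tf 3 = 3 from map_ofNat _ 3]
  ring

lemma sigma_p : sg pr = pr := by
  rw [pr, map_add, map_pow, map_pow, sg_X0, sg_X1]
  apply mul_left_cancel₀ four_ne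
  linear_combination ((1:R2) * (X 1 : R2)^2 + (1:R2) * (X 0 : R2)^2 + (2:R2) * (C (1/2:ℝ)) * (X 1 : R2)^2 + (2:R2) * (C (1/2:ℝ)) * (X 0 : R2)^2) * rel_u + ((1:R2) * (X 1 : R2)^2 + (1:R2) * (X 0 : R2)^2) * rel_v

lemma sigma_q : sg qr = qr := by
  rw [qr, map_sub, map_pow, map_mul, map_mul, map_pow, sg_X0, sg_X1,
    show sg 3 = 3 from map_ofNat _ 3]
  apply mul_left_cancel₀ eight_ne
  linear_combination ((3:R2) * (X 0 : R2) * (X 1 : R2)^2 + (-1:R2) * (X 0 : R2)^3 + (6:R2) * (C (Real.sqrt 3/2:ℝ)) * (X 1 : R2)^3 + (-18:R2) * (C (Real.sqrt 3/2:ℝ)) * (X 0 : R2)^2 * (X 1 : R2) + (-36:R2) * (C (Real.sqrt 3/2:ℝ))^2 * (X 0 : R2) * (X 1 : R2)^2 + (12:R2) * (C (Real.sqrt 3/2:ℝ))^2 * (X 0 : R2)^3 + (6:R2) * (C (1/2:ℝ)) * (X 0 : R2) * (X 1 : R2)^2 + (-2:R2) * (C (1/2:ℝ)) * (X 0 : R2)^3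 + (12:R2) * (C (1/2:ℝ)) * (C (Real.sqrt 3/2:ℝ)) * (X 1 : R2)^3 + (-36:R2) * (C (1/2:ℝ)) * (C (Real.sqrt 3/2:ℝ)) * (X 0 : R2)^2 * (X 1 : R2) + (12:R2) * (C (1/2:ℝ))^2 * (X 0 : R2) * (X 1 : R2)^2 + (-4:R2) * (C (1/2:ℝ))^2 * (X 0 : R2)^3) * rel_u + ((-9:R2) * (X 0 : R2) * (X 1 : R2)^2 + (3:R2) * (X 0 : R2)^3 + (-2:R2) * (C (Real.sqrt 3/2:ℝ)) * (X 1 : R2)^3 + (6:R2) * (C (Real.sqrt 3/2:ℝ)) * (X 0 : R2)^2 * (X 1 : R2)) * rel_v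

lemma sum0 : X 0 + sg (X 0) + sg (sg (X 0)) = 0 := by
  rw [sg_X0, map_sub, map_mul, map_mul, map_neg, sg_C, sg_C, sg_X0, sg_X1]
  apply mul_left_cancel₀ four_ne
  rw [mul_zero]
  linear_combination ((-1:R2) * (X 0 : R2) + (4:R2) * (C (Real.sqrt 3/2:ℝ)) * (X 1 : R2) + (2:R2) * (C (1/2:ℝ)) * (X 0 : R2)) * rel_u + ((-1:R2) * (X 0 : R2)) * rel_v

lemma sumsq : 2 * ((X 0)^2 + (sg (X 0))^2 + (sg (sg (X 0)))^2) = 3 * pr := by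
  rw [sg_X0, map_sub, map_mul, map_mul, map_neg, sg_C, sg_C, sg_X0, sg_X1, pr]
  apply mul_left_cancel₀ eight_ne
  linear_combination ((5:R2) * (X 0 : R2)^2 + (24:R2) * (C (Real.sqrt 3/2:ℝ)) * (X 0 : R2) * (X 1 : R2) + (16:R2) * (C (Real.sqrt 3/2:ℝ))^2 * (X 1 : R2)^2 + (-8:R2) * (C (Real.sqrt 3/2:ℝ))^2 * (X 0 : R2)^2 + (-32:R2) * (C (Real.sqrt 3/2:ℝ))^3 * (X 0 : R2) * (X 1 : R2) + (10:R2) * (C (1/2:ℝ)) * (X 0 : R2)^2 + (16:R2) * (C (1/2:ℝ)) * (C (Real.sqrt 3/2:ℝ)) * (X 0 : R2) * (X 1 : R2) + (32:R2) * (C (1/2:ℝ)) * (C (Real.sqrt 3/2:ℝ))^2 * (X 1 : R2)^2 + (-16:R2) * (C (1/2:ℝ)) * (C (Real.sqrt 3/2:ℝ))^2 * (X 0 : R2)^2 + (4:R2) * (C (1/2:ℝ))^2 * (X 0 : R2)^2 + (32:R2) * (C (1/2:ℝ))^2 * (C (Real.sqrt 3/2:ℝ)) * (X 0 : R2) * (X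 1 : R2) + (8:R2) * (C (1/2:ℝ))^3 * (X 0 : R2)^2) * rel_u + ((8:R2) * (X 1 : R2)^2 + (1:R2) * (X 0 : R2)^2 + (-8:R2) * (C (Real.sqrt 3/2:ℝ)) * (X 0 : R2) * (X 1 : R2) + (4:R2) * (C (Real.sqrt 3/2:ℝ))^2 * (X 0 : R2)^2) * rel_v

end
end DihedAux
namespace DihedAux
noncomputable section

def Asub : Subalgebra ℝ R2 := Algebra.adjoin ℝ ({pr, qr} : Set R2)

lemma pr_mem : pr ∈ Asub := Algebra.subset_adjoin (Set.mem_insert _ _)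
lemma qr_mem : qr ∈ Asub := Algebra.subset_adjoin (Set.mem_insert_of_mem _ rfl)
lemma C_mem (r : ℝ) : C r ∈ Asub := by
  rw [← algebraMap_eq]
  exact Subalgebra.algebraMap_mem _ r

lemma sg_fix_A {f : R2} (hf : f ∈ Asub) : sg f = f := by
  induction hf using Algebra.adjoin_induction with
  | mem g hg =>
    rcases hg with rfl | hg
    · exact sigma_p
    · rw [Set.mem_singleton_iff] at hg
      subst hg
      exact sigma_q
  | algebraMap r => exact sg.commutes r
  | add g h _ _ hg hh => rw [map_add, hg, hh]
  | mul g h _ _ hg hh => rw [map_mul, hg, hh]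

lemma rel_c14 : (C (1/4 : ℝ) : R2) * 4 = 1 := by
  have h4 : ((4 : R2)) = C (4 : ℝ) := (map_ofNat (C : ℝ →+* R2) 4).symm
  rw [h4, ← C_mul]
  norm_num

lemma rel_c34 : (C (3/4 : ℝ) : R2) * 4 = 3 := by
  have h4 : ((4 : R2)) = C (4 : ℝ) := (map_ofNat (C : ℝ →+* R2) 4).symm
  have h3 : ((3 : R2)) = C (3 : ℝ) := (map_ofNat (C : ℝ →+* R2) 3).symm
  rw [h4, h3, ← C_mul]
  norm_num

lemma mul_M {a b c a2 b2 c2 : R2} (ha : a ∈ Asub) (hb : b ∈ Asub) (hc : c ∈ Asub)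
    (ha2 : a2 ∈ Asub) (hb2 : b2 ∈ Asub) (hc2 : c2 ∈ Asub) :
    ∃ u ∈ Asub, ∃ v ∈ Asub, ∃ w ∈ Asub,
      (a + b * X 0 + c * X 0 ^ 2) * (a2 + b2 * X 0 + c2 * X 0 ^ 2)
        = u + v * X 0 + w * X 0 ^ 2 := by
  refine ⟨a * a2 + C (1/4:ℝ) * qr * (b * c2 + c * b2),
    add_mem (mul_mem ha ha2)
      (mul_mem (mul_mem (C_mem _) qr_mem) (add_mem (mul_mem hb hc2) (mul_mem hc hb2))),
    a * b2 + b * a2 + C (3/4:ℝ) * pr * (b * c2 + c * b2) + C (1/4:ℝ) * qr * (c * c2),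
    add_mem (add_mem (add_mem (mul_mem ha hb2) (mul_mem hb ha2))
      (mul_mem (mul_mem (C_mem _) pr_mem) (add_mem (mul_mem hb hc2) (mul_mem hc hb2))))
      (mul_mem (mul_mem (C_mem _) qr_mem) (mul_mem hc hc2)),
    a * c2 + b * b2 + c * a2 + C (3/4:ℝ) * pr * (c * c2),
    add_mem (add_mem (add_mem (mul_mem ha hc2) (mul_mem hb hb2)) (mul_mem hc ha2))
      (mul_mem (mul_mem (C_mem _) pr_mem) (mul_mem hc hc2)), ?_⟩
  apply mul_left_cancel₀ four_ne
  rw [pr, qr]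
  linear_combination ((3:R2) * (X 0 : R2) * (X 1 : R2)^2 * c * b2 + (3:R2) * (X 0 : R2) * (X 1 : R2)^2 * b * c2 + (3:R2) * (X 0 : R2)^2 * (X 1 : R2)^2 * c * c2 + (-1:R2) * (X 0 : R2)^3 * c * b2 + (-1:R2) * (X 0 : R2)^3 * b * c2 + (-1:R2) * (X 0 : R2)^4 * c * c2) * rel_c14 + ((-1:R2) * (X 0 : R2) * (X 1 : R2)^2 * c * b2 + (-1:R2) * (X 0 : R2) * (X 1 : R2)^2 * b * c2 + (-1:R2) * (X 0 : R2)^2 * (X 1 : R2)^2 * c * c2 + (-1:R2) * (X 0 : R2)^3 * c * b2 + (-1:R2) * (X 0 : R2)^3 * b * c2 + (-1:R2) * (X 0 : R2)^4 * c * c2) * rel_c34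

lemma mem_M_of_adjoin {f : R2} (hf : f ∈ Algebra.adjoin ℝ ({X 0, pr} : Set R2)) :
    ∃ a ∈ Asub, ∃ b ∈ Asub, ∃ c ∈ Asub, f = a + b * X 0 + c * X 0 ^ 2 := by
  induction hf using Algebra.adjoin_induction with
  | mem g hg =>
    rcases hg with rfl | hg
    · exact ⟨0, zero_mem _, 1, one_mem _, 0, zero_mem _, by ring⟩
    · rw [Set.mem_singleton_iff] at hg
      subst hg
      exact ⟨pr, pr_mem, 0, zero_mem _, 0, zero_mem _, by ring⟩
  | algebraMap r =>
    exact ⟨C r, C_mem r, 0, zero_mem _, 0, zero_mem _, by rw [algebraMap_eq]; ring⟩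
  | add g h _ _ hg hh =>
    obtain ⟨a, ha, b, hb, c, hc, rfl⟩ := hg
    obtain ⟨a2, ha2, b2, hb2, c2, hc2, rfl⟩ := hh
    exact ⟨a + a2, add_mem ha ha2, b + b2, add_mem hb hb2, c + c2, add_mem hc hc2, by ring⟩
  | mul g h _ _ hg hh =>
    obtain ⟨a, ha, b, hb, c, hc, rfl⟩ := hg
    obtain ⟨a2, ha2, b2, hb2, c2, hc2, rfl⟩ := hh
    exact mul_M ha hb hc ha2 hb2 hc2

end
end DihedAux
namespace DihedAux
noncomputable section

lemma tf_C (r : ℝ) : tf (C r) = C r := by simp [tf, algebraMap_eq]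

lemma monomial_expand (m : Idx) (c : ℝ) :
    monomial m c = C c * X 0 ^ (m 0) * X 1 ^ (m 1) := by
  rw [monomial_eq, Finsupp.prod_fintype _ _ (fun i => pow_zero _), Fin.prod_univ_two, mul_assoc]

lemma tf_monomial (m : Idx) (c : ℝ) : tf (monomial m c) = monomial m ((-1:ℝ)^(m 1) * c) := by
  rw [monomial_expand, map_mul, map_mul, map_pow, map_pow, tf_C, tf_X0, tf_X1, neg_pow,
    monomial_expand]
  have : (C ((-1:ℝ)^(m 1) * c) : R2) = C ((-1:ℝ)^(m 1)) * C c := by rw [C_mul]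
  rw [this, show (C ((-1:ℝ)^(m 1)) : R2) = (-1:R2)^(m 1) by rw [map_pow, map_neg, map_one]]
  ring

lemma tf_coeff (f : R2) (m : Idx) : coeff m (tf f) = (-1:ℝ)^(m 1) * coeff m f := by
  have hrep : tf f = ∑ m' ∈ f.support, monomial m' ((-1:ℝ)^(m' 1) * coeff m' f) := by
    conv_lhs => rw [f.as_sum]
    rw [map_sum]
    exact Finset.sum_congr rfl fun m' _ => tf_monomial m' _
  rw [hrep, coeff_sum]
  have hsummand : ∀ m' : Idx, coeff m (monomial m' ((-1:ℝ)^(m' 1) * coeff m' f))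
      = if m' = m then (-1:ℝ)^(m' 1) * coeff m' f else 0 := fun m' => coeff_monomial m m' _
  by_cases hm : m ∈ f.support
  · rw [Finset.sum_eq_single_of_mem m hm ?_]
    · rw [hsummand, if_pos rfl]
    · intro b _ hb
      rw [hsummand, if_neg hb]
  · have h0 : coeff m f = 0 := notMem_support_iff.mp hm
    rw [h0, mul_zero]
    apply Finset.sum_eq_zero
    intro b hbs
    rw [hsummand, if_neg]
    intro hbm
    rw [hbm] at hbs
    exact hm hbs

lemma even_coeff {f : R2} (hτ : tf f = f) {m : Idx} (hm : Odd (m 1)) : coeff m f = 0 := by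
  have h := tf_coeff f m
  rw [hτ, hm.neg_one_pow] at h
  linarith [h]

lemma step1 {f : R2} (hτ : tf f = f) : f ∈ Algebra.adjoin ℝ ({X 0, pr} : Set R2) := by
  have hX1sq : (X 1 : R2) ^ 2 ∈ Algebra.adjoin ℝ ({X 0, pr} : Set R2) := by
    have : (X 1 : R2) ^ 2 = pr - X 0 ^ 2 := by rw [pr]; ring
    rw [this]
    exact sub_mem (Algebra.subset_adjoin (Set.mem_insert_of_mem _ rfl))
      (pow_mem (Algebra.subset_adjoin (Set.mem_insert _ _)) 2)
  rw [f.as_sum]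
  apply sum_mem
  intro m hms
  rcases Nat.even_or_odd (m 1) with he | ho
  · obtain ⟨t, ht⟩ := he
    rw [monomial_expand, show m 1 = 2 * t by omega, pow_mul]
    exact mul_mem (mul_mem (by
        rw [← algebraMap_eq]
        exact Subalgebra.algebraMap_mem _ _)
      (pow_mem (Algebra.subset_adjoin (Set.mem_insert _ _)) _))
      (pow_mem hX1sq t)
  · rw [even_coeff hτ ho, map_zero]
    exact zero_mem _

lemma six_ne : ((6:R2)) ≠ 0 := by norm_num

lemma invariant_mem_A {f : R2} (hσ : sg f = f) (hτ : tf f = f) : f ∈ Asub := by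
  obtain ⟨a, ha, b, hb, c, hc, rfl⟩ := mem_M_of_adjoin (step1 hτ)
  have eA : a + b * sg (X 0) + c * (sg (X 0))^2 = a + b * X 0 + c * X 0 ^ 2 := by
    have h := hσ
    simp only [map_add, map_mul, map_pow, sg_fix_A ha, sg_fix_A hb, sg_fix_A hc] at h
    exact h
  have eB : a + b * sg (sg (X 0)) + c * (sg (sg (X 0)))^2 = a + b * X 0 + c * X 0 ^ 2 := by
    have h := congrArg sg eA
    simp only [map_add, map_mul, map_pow, sg_fix_A ha, sg_fix_A hb, sg_fix_A hc] at h
    exact h.trans eA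
  have key : a + b * X 0 + c * X 0 ^ 2 = a + (C (1/2:ℝ) * pr) * c := by
    apply mul_left_cancel₀ six_ne
    linear_combination (-2:R2) * eA + (-2:R2) * eB + (2*b) * sum0 + c * sumsq
      + (-3 * pr * c) * rel_u
  rw [key]
  exact add_mem ha (mul_mem (mul_mem (C_mem _) pr_mem) hc)

end
end DihedAux
namespace DihedAux
noncomputable section

lemma toR_P : toR Pz = pr := by
  simp [toR, Pz, pr]

lemma toR_Q : toR Qz = qr := by
  simp [toR, Qz, qr]

lemma vr_eq (m : Idx) : vr m = pr ^ (m 0) * qr ^ (m 1) := by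
  rw [vr, vz, map_mul, map_pow, map_pow, toR_P, toR_Q]

lemma range_pair : Set.range ![pr, qr] = ({pr, qr} : Set R2) := by
  ext g
  constructor
  · rintro ⟨i, rfl⟩
    fin_cases i
    · exact Set.mem_insert _ _
    · exact Set.mem_insert_of_mem _ rfl
  · rintro (rfl | hg)
    · exact ⟨0, rfl⟩
    · rw [Set.mem_singleton_iff] at hg
      exact ⟨1, by rw [hg]; rfl⟩

lemma repr_of_mem_A {f : R2} (hf : f ∈ Asub) :
    ∃ G : MvPolynomial (Fin 2) ℝ, f = ∑ m ∈ G.support, coeff m G • vr m := by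
  rw [Asub, ← range_pair, Algebra.adjoin_range_eq_range_aeval] at hf
  obtain ⟨G, hG⟩ := hf
  have hG' : aeval ![pr, qr] G = f := hG
  refine ⟨G, ?_⟩
  rw [← hG']
  rw [show (aeval ![pr, qr]) G = eval₂ (algebraMap ℝ R2) ![pr, qr] G from rfl, eval₂_eq']
  refine Finset.sum_congr rfl fun m _ => ?_
  rw [Fin.prod_univ_two, vr_eq, Algebra.smul_def]
  simp

set_option maxHeartbeats 1000000 in
lemma hard_direction {f : R2} (hσ : sg f = f) (hτ : tf f = f)
    (hint : ∀ m : Idx, ∃ n : ℤ, coeff m f = (n : ℝ)) :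
    f ∈ Algebra.adjoin ℤ ({pr, qr} : Set R2) := by
  classical
  obtain ⟨G, hG⟩ := repr_of_mem_A (invariant_mem_A hσ hτ)
  set c : Idx → ℝ := fun m => coeff m G with hc
  have hint' : ∀ m : Idx, ∃ n : ℤ, coeff m (∑ k ∈ G.support, c k • vr k) = (n : ℝ) := by
    intro m
    rw [← hG]
    exact hint m
  have hD : ∀ k ∈ G.support, c k ∈ D := by
    refine gaussD _ c fun m => ?_
    obtain ⟨n, hn⟩ := hint' m
    rw [hn]
    exact D_int n
  set eF : Idx → ℕ := fun k => if h : k ∈ G.support then (hD k h).choose else 0 with heF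
  set E := G.support.sup eF with hE
  have hden : ∀ k ∈ G.support, ∃ a : ℤ, c k = (a : ℝ) / 3 ^ E := by
    intro k hk
    obtain ⟨a, ha⟩ := (hD k hk).choose_spec
    refine ⟨a * 3 ^ (E - eF k), ?_⟩
    have heFk : eF k = (hD k hk).choose := by rw [heF]; exact dif_pos hk
    have hle : eF k ≤ E := Finset.le_sup hk
    rw [← heFk] at ha
    rw [ha]
    push_cast
    rw [show E = (E - eF k) + eF k by omega, pow_add]
    have h3 : ((3:ℝ)) ^ (eF k) ≠ 0 := by positivity
    have h3' : ((3:ℝ)) ^ (E - eF k) ≠ 0 := by positivity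
    field_simp
    rw [Nat.add_sub_cancel]
  have hfinal : ∀ k ∈ G.support, ∃ n : ℤ, c k = (n : ℝ) :=
    descent E G.support c hden hint'
  rw [hG]
  apply sum_mem
  intro k hk
  obtain ⟨n, hn⟩ := hfinal k hk
  have hn' : coeff k G = ((n : ℤ) : ℝ) := hn
  rw [hn', vr_eq, Int.cast_smul_eq_zsmul]
  have hp : pr ∈ Algebra.adjoin ℤ ({pr, qr} : Set R2) :=
    Algebra.subset_adjoin (Set.mem_insert _ _)
  have hq : qr ∈ Algebra.adjoin ℤ ({pr, qr} : Set R2) :=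
    Algebra.subset_adjoin (Set.mem_insert_of_mem _ rfl)
  exact zsmul_mem (mul_mem (pow_mem hp _) (pow_mem hq _)) n

lemma easy_direction {f : R2} (hf : f ∈ Algebra.adjoin ℤ ({pr, qr} : Set R2)) :
    (sg f = f ∧ tf f = f) ∧ f ∈ Set.range toR := by
  induction hf using Algebra.adjoin_induction with
  | mem g hg =>
    rcases hg with rfl | hg
    · exact ⟨⟨sigma_p, tau_p⟩, ⟨Pz, toR_P⟩⟩
    · rw [Set.mem_singleton_iff] at hg
      subst hg
      exact ⟨⟨sigma_q, tau_q⟩, ⟨Qz, toR_Q⟩⟩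
  | algebraMap n =>
    refine ⟨⟨?_, ?_⟩, ⟨(n : Z2), ?_⟩⟩
    · rw [eq_intCast (algebraMap ℤ R2) n, map_intCast]
    · rw [eq_intCast (algebraMap ℤ R2) n, map_intCast]
    · rw [eq_intCast (algebraMap ℤ R2) n, map_intCast]
  | add g h _ _ hg hh =>
    obtain ⟨⟨hg1, hg2⟩, ⟨gz, rfl⟩⟩ := hg
    obtain ⟨⟨hh1, hh2⟩, ⟨hz, rfl⟩⟩ := hh
    exact ⟨⟨by rw [map_add, hg1, hh1], by rw [map_add, hg2, hh2]⟩,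
      ⟨gz + hz, by rw [map_add]⟩⟩
  | mul g h _ _ hg hh =>
    obtain ⟨⟨hg1, hg2⟩, ⟨gz, rfl⟩⟩ := hg
    obtain ⟨⟨hh1, hh2⟩, ⟨hz, rfl⟩⟩ := hh
    exact ⟨⟨by rw [map_mul, hg1, hh1], by rw [map_mul, hg2, hh2]⟩,
      ⟨gz * hz, by rw [map_mul]⟩⟩

end
end DihedAux

open DihedAux in
/-- ℝ[x,y]^{D₃} ∩ ℤ[x,y] = ℤ[x² + y², x³ − 3xy²]. -/
theorem dihedral_invariants_with_integer_coeffs :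
    {f : MvPolynomial (Fin 2) ℝ |
        (aeval ![-(C (1 / 2 : ℝ)) * X 0 - C (Real.sqrt 3 / 2) * X 1,
              C (Real.sqrt 3 / 2) * X 0 - C (1 / 2 : ℝ) * X 1] f = f ∧
          aeval ![X 0, -X 1] f = f) ∧
          ∀ m : Fin 2 →₀ ℕ, ∃ n : ℤ, f.coeff m = (n : ℝ)} =
      ↑(Algebra.adjoin ℤ
        ({X 0 ^ 2 + X 1 ^ 2, X 0 ^ 3 - 3 * X 0 * X 1 ^ 2} : Set (MvPolynomial (Fin 2) ℝ))) := by
  ext f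
  simp only [Set.mem_setOf_eq, SetLike.mem_coe]
  constructor
  · rintro ⟨⟨hσ', hτ'⟩, hint⟩
    exact hard_direction hσ' hτ' hint
  · intro hf
    obtain ⟨⟨h1, h2⟩, ⟨g, rfl⟩⟩ := easy_direction hf
    exact ⟨⟨h1, h2⟩, fun m => ⟨coeff m g, coeff_toR g m⟩⟩
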